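/- Let 0 ≤ η < 1/2, v ∈ (0, v₀) where v₀ = √(−G(√(η²+2)−3η)), and let y(v) be the smallest positive root of G(z) + v² = 0, where G(z) = (1/4)z⁴ + 2ηz³ + 4η²z² − z². Then y(v) ≥ v. -/
import Mathlib

theorem yv_ge_v (η : ℝ) (hη0 : 0 ≤ η) (hη : η < 1/2)
    (G : ℝ → ℝ) (hG : ∀ z, G z = (1/4) * z^4 + 2*η*z^3 + 4*η^2*z^2 - z^2)
    (v₀ : ℝ) (hv₀ : v₀ = Real.sqrt (-(G (Real.sqrt (η^2 + 2) - 3*η))))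
    (v : ℝ) (hv : v ∈ Set.Ioo 0 v₀)
    (yv : ℝ) (hyv : IsLeast {z : ℝ | 0 < z ∧ G z + v^2 = 0} yv) :
    yv ≥ v := by
  obtain ⟨⟨hy0, hroot⟩, _⟩ := hyv
  rw [hG] at hroot
  have hv0 : 0 < v := hv.1
  nlinarith [sq_nonneg (yv + 4*η), mul_pos hy0 hy0, sq_nonneg (yv - v), mul_pos hv0 hy0, sq_nonneg yv, mul_nonneg (mul_nonneg hη0 hy0.le) hy0.le]
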